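/- With notation as in the formal annulus setting over a complete DVR R of unequal characteristic (degree n with p | n, f(y) = v^n·α, dy/y = 𝔡·v^m·β·(dv/v) with 𝔡 ∈ R, β ∈ C^*, m ∈ ℕ): one has ν_p(m) < ν_p(n) whenever m ≠ 0, and m = 0 if and only if (𝔡) = (n) as ideals of R. -/

import Mathlib

noncomputable section

/-- The formal annulus `R[[u,v]]/(uv - c)` of thickness `c` over `R`. -/
abbrev FormalAnnulus (R : Type*) [CommRing R] (c : R) :=
  MvPowerSeries (Fin 2) R ⧸
    Ideal.span {(MvPowerSeries.X 0 * MvPowerSeries.X 1 : MvPowerSeries (Fin 2) R) -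
      MvPowerSeries.C (σ := Fin 2) (R := R) c}

namespace Stmt7Aux

open MvPowerSeries

variable {R : Type*} [CommRing R]


def wt (d : Fin 2 →₀ ℕ) : ℤ := (d 1 : ℤ) - (d 0 : ℤ)

lemma wt_add (a b : Fin 2 →₀ ℕ) : wt (a + b) = wt a + wt b := by
  simp only [wt, Finsupp.add_apply]
  push_cast
  ring

def deltaFun (f : MvPowerSeries (Fin 2) R) : MvPowerSeries (Fin 2) R :=
  fun d => wt d • f d

lemma coeff_deltaFun (d : Fin 2 →₀ ℕ) (f : MvPowerSeries (Fin 2) R) :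
    coeff (R := R) d (deltaFun f) = wt d • coeff (R := R) d f := rfl

def deltaLin : MvPowerSeries (Fin 2) R →ₗ[R] MvPowerSeries (Fin 2) R where
  toFun := deltaFun
  map_add' f g := by
    ext d
    simp only [coeff_deltaFun, map_add, smul_add]
  map_smul' r f := by
    ext d
    simp only [coeff_deltaFun, coeff_smul, RingHom.id_apply]
    rw [mul_smul_comm]

def delta : Derivation R (MvPowerSeries (Fin 2) R) (MvPowerSeries (Fin 2) R) where
  toLinearMap := deltaLin
  map_one_eq_zero' := by
    ext d
    classical
    show coeff (R := R) d (deltaFun 1) = coeff (R := R) d 0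
    rw [coeff_deltaFun, map_zero, coeff_one]
    by_cases h : d = 0
    · subst h; simp [wt]
    · rw [if_neg h, smul_zero]
  leibniz' f g := by
    classical
    ext d
    show coeff (R := R) d (deltaFun (f * g)) = coeff (R := R) d (f • deltaFun g + g • deltaFun f)
    rw [smul_eq_mul, smul_eq_mul, map_add, mul_comm g (deltaFun f)]
    rw [coeff_deltaFun, coeff_mul, coeff_mul, coeff_mul, Finset.smul_sum,
      ← Finset.sum_add_distrib]
    refine Finset.sum_congr rfl fun pq hpq => ?_
    rw [Finset.HasAntidiagonal.mem_antidiagonal] at hpq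
    rw [coeff_deltaFun, coeff_deltaFun, ← hpq, wt_add, add_smul, mul_smul_comm,
      smul_mul_assoc]
    rw [add_comm]

lemma delta_coe : ⇑(delta (R := R)) = deltaFun := rfl

lemma deltaFun_mul (f g : MvPowerSeries (Fin 2) R) :
    deltaFun (f * g) = f * deltaFun g + g * deltaFun f := by
  have := (delta (R := R)).leibniz f g
  rw [delta_coe] at this
  simpa [smul_eq_mul] using this

lemma deltaFun_add (f g : MvPowerSeries (Fin 2) R) :
    deltaFun (f + g) = deltaFun f + deltaFun g := map_add (deltaLin (R := R)) f g

lemma deltaFun_sub (f g : MvPowerSeries (Fin 2) R) :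
    deltaFun (f - g) = deltaFun f - deltaFun g := map_sub (deltaLin (R := R)) f g

lemma deltaFun_X1_pow (j : ℕ) :
    deltaFun ((X 1 : MvPowerSeries (Fin 2) R) ^ j) =
      C (σ := Fin 2) (R := R) (j : R) * (X 1 : MvPowerSeries (Fin 2) R) ^ j := by
  classical
  ext d
  rw [coeff_deltaFun, coeff_C_mul, X_pow_eq, coeff_monomial]
  by_cases h : d = Finsupp.single 1 j
  · subst h
    rw [if_pos rfl]
    have h1 : wt (Finsupp.single (1 : Fin 2) j) = (j : ℤ) := by
      simp [wt, Finsupp.single_apply]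
    rw [h1, zsmul_eq_mul]
    push_cast
    ring
  · rw [if_neg h, smul_zero, mul_zero]



abbrev gelt (c : R) : MvPowerSeries (Fin 2) R :=
  X 0 * X 1 - C (σ := Fin 2) (R := R) c

abbrev Ic (c : R) : Ideal (MvPowerSeries (Fin 2) R) := Ideal.span {gelt c}

lemma deltaFun_gelt (c : R) : deltaFun (gelt c) = 0 := by
  classical
  have hX : (X 0 * X 1 : MvPowerSeries (Fin 2) R) =
      monomial (R := R) (Finsupp.single 0 1 + Finsupp.single 1 1) 1 := by
    rw [show (X 0 : MvPowerSeries (Fin 2) R) = monomial (R := R) (Finsupp.single 0 1) 1 from rfl,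
      show (X 1 : MvPowerSeries (Fin 2) R) = monomial (R := R) (Finsupp.single 1 1) 1 from rfl,
      monomial_mul_monomial, one_mul]
  ext d
  rw [map_zero, coeff_deltaFun, map_sub, hX, coeff_monomial, coeff_C]
  by_cases h1 : d = Finsupp.single 0 1 + Finsupp.single 1 1
  · subst h1
    have : wt (Finsupp.single (0 : Fin 2) 1 + Finsupp.single 1 1) = 0 := by
      simp [wt, Finsupp.add_apply, Finsupp.single_apply]
    rw [this, zero_smul]
  · rw [if_neg h1]
    by_cases h0 : d = 0
    · subst h0
      have : wt (0 : Fin 2 →₀ ℕ) = 0 := by simp [wt]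
      rw [this, zero_smul]
    · rw [if_neg h0, sub_zero, smul_zero]

lemma deltaFun_mem (c : R) {f : MvPowerSeries (Fin 2) R} (hf : f ∈ Ic c) :
    deltaFun f ∈ Ic c := by
  obtain ⟨x, hx⟩ := Ideal.mem_span_singleton'.mp hf
  rw [← hx, deltaFun_mul, deltaFun_gelt, mul_zero, zero_add]
  exact Ideal.mem_span_singleton'.mpr ⟨deltaFun x, (mul_comm _ _)⟩

def deltaCFun (c : R) : FormalAnnulus R c → FormalAnnulus R c :=
  fun x => Ideal.Quotient.mk (Ic c) (deltaFun (Quotient.out x))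

lemma deltaCFun_mk (c : R) (f : MvPowerSeries (Fin 2) R) :
    deltaCFun c (Ideal.Quotient.mk (Ic c) f) = Ideal.Quotient.mk (Ic c) (deltaFun f) := by
  have h1 : Ideal.Quotient.mk (Ic c) (Quotient.out (Ideal.Quotient.mk (Ic c) f)) =
      Ideal.Quotient.mk (Ic c) f := Quotient.out_eq' _
  rw [deltaCFun, Ideal.Quotient.eq, ← deltaFun_sub]
  exact deltaFun_mem c (Ideal.Quotient.eq.mp h1)

set_option maxHeartbeats 1000000 in
def deltaC (c : R) : Derivation R (FormalAnnulus R c) (FormalAnnulus R c) where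
  toFun := deltaCFun c
  map_add' x y := by
    obtain ⟨f, rfl⟩ := Ideal.Quotient.mk_surjective x
    obtain ⟨g, rfl⟩ := Ideal.Quotient.mk_surjective y
    rw [← map_add, deltaCFun_mk, deltaCFun_mk, deltaCFun_mk, deltaFun_add, map_add]
  map_smul' r x := by
    obtain ⟨f, rfl⟩ := Ideal.Quotient.mk_surjective x
    have h1 : r • Ideal.Quotient.mk (Ic c) f = Ideal.Quotient.mk (Ic c) (r • f) := by
      rw [← Ideal.Quotient.mkₐ_eq_mk (R₁ := R), ← map_smul]
    have h2 : ∀ g, r • Ideal.Quotient.mk (Ic c) g = Ideal.Quotient.mk (Ic c) (r • g) := by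
      intro g
      rw [← Ideal.Quotient.mkₐ_eq_mk (R₁ := R), ← map_smul]
    simp only [RingHom.id_apply]
    rw [h2 f, deltaCFun_mk, deltaCFun_mk, h2]
    congr 1
    exact map_smul deltaLin r f
  map_one_eq_zero' := by
    have h1 : (1 : FormalAnnulus R c) = Ideal.Quotient.mk (Ic c) 1 := by rw [map_one]
    show deltaCFun c 1 = 0
    rw [h1, deltaCFun_mk]
    have : deltaFun (1 : MvPowerSeries (Fin 2) R) = 0 := (delta (R := R)).map_one_eq_zero
    rw [this, map_zero]
  leibniz' x y := by
    obtain ⟨f, rfl⟩ := Ideal.Quotient.mk_surjective x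
    obtain ⟨g, rfl⟩ := Ideal.Quotient.mk_surjective y
    show deltaCFun c _ = _ • deltaCFun c _ + _ • deltaCFun c _
    rw [← map_mul, deltaCFun_mk, deltaCFun_mk, deltaCFun_mk, deltaFun_mul, map_add,
      smul_eq_mul, smul_eq_mul, ← map_mul, ← map_mul]

lemma deltaC_mk (c : R) (f : MvPowerSeries (Fin 2) R) :
    deltaC c (Ideal.Quotient.mk (Ic c) f) = Ideal.Quotient.mk (Ic c) (deltaFun f) :=
  deltaCFun_mk c f

def pr (i j : ℕ) : Fin 2 →₀ ℕ := Finsupp.single 0 i + Finsupp.single 1 j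

lemma pr_zero : pr 0 0 = (0 : Fin 2 →₀ ℕ) := by simp [pr]

lemma pr_apply_one (i j : ℕ) : (pr i j) 1 = j := by
  simp [pr, Finsupp.add_apply, Finsupp.single_apply]

lemma pr_apply_zero' (i j : ℕ) : (pr i j) 0 = i := by
  simp [pr, Finsupp.add_apply, Finsupp.single_apply]

lemma wt_pr (i j : ℕ) : wt (pr i j) = (j : ℤ) - (i : ℤ) := by
  rw [wt, pr_apply_one, pr_apply_zero']

lemma pr_add_pr (i j i' j' : ℕ) : pr i j + pr i' j' = pr (i + i') (j + j') := by
  simp only [pr, Finsupp.single_add]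
  abel

lemma single_one_eq_pr (j : ℕ) : Finsupp.single (1 : Fin 2) j = pr 0 j := by
  simp [pr]

def phi (c : R) (k N : ℕ) (f : MvPowerSeries (Fin 2) R) : R :=
  ∑ i ∈ Finset.range N, c ^ i * coeff (R := R) (pr i (k + i)) f

lemma phi_add (c : R) (k N : ℕ) (f g : MvPowerSeries (Fin 2) R) :
    phi c k N (f + g) = phi c k N f + phi c k N g := by
  simp only [phi, map_add, mul_add, Finset.sum_add_distrib]

lemma phi_sub (c : R) (k N : ℕ) (f g : MvPowerSeries (Fin 2) R) :
    phi c k N (f - g) = phi c k N f - phi c k N g := by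
  simp only [phi, map_sub, mul_sub, Finset.sum_sub_distrib]

lemma phi_Cmul (c r : R) (k N : ℕ) (f : MvPowerSeries (Fin 2) R) :
    phi c k N (C (σ := Fin 2) (R := R) r * f) = r * phi c k N f := by
  simp only [phi, coeff_C_mul, Finset.mul_sum]
  exact Finset.sum_congr rfl fun i _ => by ring

lemma phi_deltaFun (c : R) (k N : ℕ) (f : MvPowerSeries (Fin 2) R) :
    phi c k N (deltaFun f) = (k : R) * phi c k N f := by
  simp only [phi, coeff_deltaFun, wt_pr, Finset.mul_sum]
  refine Finset.sum_congr rfl fun i _ => ?_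
  have h1 : ((k : ℕ) + i : ℤ) - (i : ℤ) = (k : ℤ) := by push_cast; ring
  rw [show (((k + i : ℕ) : ℤ) - (i : ℤ)) = (k : ℤ) by push_cast; ring]
  rw [zsmul_eq_mul]
  push_cast
  ring

lemma phi_mul_X1pow_shift (c : R) (k j N : ℕ) (f : MvPowerSeries (Fin 2) R) :
    phi c (k + j) N (f * X 1 ^ j) = phi c k N f := by
  refine Finset.sum_congr rfl fun i _ => ?_
  congr 1
  rw [X_pow_eq, single_one_eq_pr]
  have h1 : pr i (k + j + i) = pr i (k + i) + pr 0 j := by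
    rw [pr_add_pr]
    congr 1
    ring
  rw [h1]
  exact coeff_add_mul_monomial (pr i (k+i)) (pr 0 j) f 1 |>.trans (mul_one _)

lemma phi_mul_X1pow_shift' (c : R) (j N : ℕ) (f : MvPowerSeries (Fin 2) R) :
    phi c j N (f * X 1 ^ j) = phi c 0 N f := by
  have := phi_mul_X1pow_shift c 0 j N f
  rwa [Nat.zero_add] at this

lemma phi_mul_X1pow_dvd (c : R) (k s N : ℕ) (f : MvPowerSeries (Fin 2) R) :
    c ^ s ∣ phi c k N (f * X 1 ^ (k + s)) := by
  classical
  refine Finset.dvd_sum fun i _ => ?_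
  rw [X_pow_eq, coeff_mul_monomial]
  by_cases h : s ≤ i
  · rw [if_pos]
    · exact dvd_mul_of_dvd_left (pow_dvd_pow c h) _
    · rw [Finsupp.single_le_iff, pr_apply_one]
      omega
  · rw [if_neg, mul_zero]
    · exact dvd_zero _
    · rw [Finsupp.single_le_iff, pr_apply_one]
      omega

lemma phi_mul_gelt (c : R) (k N : ℕ) (f : MvPowerSeries (Fin 2) R) :
    phi c k (N + 1) (f * gelt c) = -(c ^ (N + 1) * coeff (R := R) (pr N (k + N)) f) := by
  classical
  have hX : (X 0 * X 1 : MvPowerSeries (Fin 2) R) = monomial (R := R) (pr 1 1) 1 := by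
    rw [show (X 0 : MvPowerSeries (Fin 2) R) = monomial (R := R) (Finsupp.single 0 1) 1 from rfl,
      show (X 1 : MvPowerSeries (Fin 2) R) = monomial (R := R) (Finsupp.single 1 1) 1 from rfl,
      monomial_mul_monomial, one_mul, pr]
  have h1 : phi c k (N + 1) (f * (X 0 * X 1)) =
      ∑ i ∈ Finset.range N, c ^ (i + 1) * coeff (R := R) (pr i (k + i)) f := by
    rw [phi, Finset.sum_range_succ']
    have h0 : coeff (R := R) (pr 0 (k + 0)) (f * (X 0 * X 1)) = 0 := by
      rw [hX, coeff_mul_monomial, if_neg]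
      intro hle
      have := hle 0
      rw [pr_apply_zero', pr_apply_zero'] at this
      omega
    rw [h0, mul_zero, add_zero]
    refine Finset.sum_congr rfl fun i _ => ?_
    congr 1
    rw [hX]
    have h2 : pr (i + 1) (k + (i + 1)) = pr i (k + i) + pr 1 1 := by
      rw [pr_add_pr]
      congr 1
    rw [h2]
    exact (coeff_add_mul_monomial (pr i (k+i)) (pr 1 1) f 1).trans (mul_one _)
  have h2 : phi c k (N + 1) (f * C (σ := Fin 2) (R := R) c) =
      (∑ i ∈ Finset.range N, c ^ (i + 1) * coeff (R := R) (pr i (k + i)) f)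
        + c ^ (N + 1) * coeff (R := R) (pr N (k + N)) f := by
    rw [phi, Finset.sum_range_succ]
    congr 1
    · refine Finset.sum_congr rfl fun i _ => ?_
      rw [mul_comm f, coeff_C_mul]
      ring
    · rw [mul_comm f, coeff_C_mul]
      ring
  rw [show f * gelt c = f * (X 0 * X 1) - f * C (σ := Fin 2) (R := R) c by rw [gelt]; ring,
    phi_sub, h1, h2]
  ring

lemma phi_zero_unit [IsLocalRing R] {c : R} (hcu : ¬ IsUnit c) (N : ℕ)
    {A : MvPowerSeries (Fin 2) R} (hA : IsUnit (constantCoeff (σ := Fin 2) (R := R) A)) :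
    IsUnit (phi c 0 (N + 1) A) := by
  have h1 : phi c 0 (N + 1) A = constantCoeff (σ := Fin 2) (R := R) A +
      c * ∑ i ∈ Finset.range N, c ^ i * coeff (R := R) (pr (i + 1) (i + 1)) A := by
    rw [phi, Finset.sum_range_succ']
    have h0 : c ^ 0 * coeff (R := R) (pr 0 (0 + 0)) A = constantCoeff (σ := Fin 2) (R := R) A := by
      rw [pow_zero, one_mul, show pr 0 (0+0) = (0 : Fin 2 →₀ ℕ) from pr_zero,
        coeff_zero_eq_constantCoeff]
    rw [h0, Finset.mul_sum, add_comm]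
    congr 1
    refine Finset.sum_congr rfl fun i _ => ?_
    rw [show (0 : ℕ) + (i + 1) = i + 1 by omega]
    ring
  by_contra hnot
  have hmem : phi c 0 (N + 1) A ∈ IsLocalRing.maximalIdeal R :=
    (IsLocalRing.mem_maximalIdeal _).mpr hnot
  have hcm : c ∈ IsLocalRing.maximalIdeal R := (IsLocalRing.mem_maximalIdeal _).mpr hcu
  have heq : constantCoeff (σ := Fin 2) (R := R) A = phi c 0 (N + 1) A -
      c * ∑ i ∈ Finset.range N, c ^ i * coeff (R := R) (pr (i + 1) (i + 1)) A := by
    rw [h1]; ring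
  have : constantCoeff (σ := Fin 2) (R := R) A ∈ IsLocalRing.maximalIdeal R := by
    rw [heq]
    exact Ideal.sub_mem _ hmem (Ideal.mul_mem_right _ _ hcm)
  exact ((IsLocalRing.mem_maximalIdeal _).mp this) hA

end Stmt7Aux

open Stmt7Aux MvPowerSeries in
/-- Unequal-characteristic half of the alternative (A).  Over a complete DVR
`R` of mixed characteristic `(0, p)`, with `y = v^n·α` (`α ∈ C^*`, `p ∣ n`) and
`dy/y = 𝔡·v^m·β·(dv/v)` (equivalently `v·dy = 𝔡·v^m·β·y·dv`), one has
`ν_p(m) < ν_p(n)` whenever `m ≠ 0`, and `m = 0` iff `(𝔡) = (n)` as ideals of `R`. -/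
theorem stmt7 (p n m : ℕ) [Fact (Nat.Prime p)] (hpn : p ∣ n) (hn : 0 < n)
    (R : Type*) [CommRing R] [IsDomain R] [IsDiscreteValuationRing R]
    [IsAdicComplete (IsLocalRing.maximalIdeal R) R] [CharZero R]
    (hres : CharP (IsLocalRing.ResidueField R) p)
    (c : R) (hc : c ≠ 0) (hcu : ¬ IsUnit c)
    (α β : (FormalAnnulus R c)ˣ) (𝔡 : R) (h𝔡 : 𝔡 ≠ 0)
    (v : FormalAnnulus R c)
    (hv : v = Ideal.Quotient.mk _ (MvPowerSeries.X 1))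
    (y : FormalAnnulus R c) (hy : y = v ^ n * α)
    (hδ : v • KaehlerDifferential.D R (FormalAnnulus R c) y =
      (algebraMap R (FormalAnnulus R c) 𝔡 * v ^ m * ↑β * y) •
        KaehlerDifferential.D R (FormalAnnulus R c) v) :
    (m ≠ 0 → padicValNat p m < padicValNat p n) ∧
    (m = 0 ↔ Ideal.span {𝔡} = Ideal.span {(n : R)}) := by
  classical
  haveI := hres
  have hp : p.Prime := Fact.out
  set C' := MvPowerSeries.C (σ := Fin 2) (R := R) with hC'
  obtain ⟨A, hA⟩ := Ideal.Quotient.mk_surjective (I := Ic c) (↑α)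
  obtain ⟨B, hB⟩ := Ideal.Quotient.mk_surjective (I := Ic c) (↑β)
  -- the residue homomorphism
  have hker : ∀ f ∈ Ic c,
      ((IsLocalRing.residue R).comp (constantCoeff (σ := Fin 2) (R := R))) f = 0 := by
    intro f hf
    obtain ⟨x, hx⟩ := Ideal.mem_span_singleton'.mp hf
    have h1 : constantCoeff (σ := Fin 2) (R := R) (gelt c) = -c := by
      simp [gelt]
    rw [← hx, RingHom.comp_apply, map_mul, h1, map_mul]
    have h2 : (IsLocalRing.residue R) (-c) = 0 := by
      rw [map_neg, neg_eq_zero]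
      exact (IsLocalRing.residue_eq_zero_iff _).mpr
        ((IsLocalRing.mem_maximalIdeal _).mpr hcu)
    rw [h2, mul_zero]
  set ε : FormalAnnulus R c →+* IsLocalRing.ResidueField R :=
    Ideal.Quotient.lift (Ic c) ((IsLocalRing.residue R).comp (constantCoeff (σ := Fin 2) (R := R)))
      hker with hε
  have hconst : ∀ G : MvPowerSeries (Fin 2) R,
      IsUnit (Ideal.Quotient.mk (Ic c) G) → IsUnit (constantCoeff (σ := Fin 2) (R := R) G) := by
    intro G hG
    have h1 : ε (Ideal.Quotient.mk (Ic c) G) ≠ 0 := (hG.map ε).ne_zero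
    rw [hε, Ideal.Quotient.lift_mk, RingHom.comp_apply] at h1
    by_contra h
    exact h1 ((IsLocalRing.residue_eq_zero_iff _).mpr
      ((IsLocalRing.mem_maximalIdeal _).mpr h))
  have hUA : IsUnit (constantCoeff (σ := Fin 2) (R := R) A) := hconst A (by rw [hA]; exact α.isUnit)
  have hUBA : IsUnit (constantCoeff (σ := Fin 2) (R := R) (B * A)) := by
    refine hconst (B * A) ?_
    rw [map_mul, hA, hB]
    exact β.isUnit.mul α.isUnit
  -- the main identity
  have hyA : y = Ideal.Quotient.mk (Ic c) (X 1 ^ n * A) := by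
    rw [hy, hv, ← hA, ← map_pow, ← map_mul]
  have E0 := congrArg (deltaC c).liftKaehlerDifferential hδ
  rw [map_smul, map_smul, Derivation.liftKaehlerDifferential_comp_D,
    Derivation.liftKaehlerDifferential_comp_D, smul_eq_mul, smul_eq_mul] at E0
  have hdv : (deltaC c) v = v := by
    rw [hv, deltaC_mk]
    congr 1
    have h1 := deltaFun_X1_pow (R := R) 1
    rw [pow_one] at h1
    rw [h1, Nat.cast_one, map_one, one_mul]
  have hdy : (deltaC c) y =
      Ideal.Quotient.mk (Ic c) (X 1 ^ n * deltaFun A + A * (C' (n : R) * X 1 ^ n)) := by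
    rw [hyA, deltaC_mk, deltaFun_mul, deltaFun_X1_pow]
  rw [hdv] at E0
  have H : Ideal.Quotient.mk (Ic c) ((C' (n : R) * A + deltaFun A) * X 1 ^ (n + 1))
      = Ideal.Quotient.mk (Ic c) ((C' 𝔡 * (B * A)) * X 1 ^ ((n + 1) + m)) := by
    have hL : Ideal.Quotient.mk (Ic c) ((C' (n : R) * A + deltaFun A) * X 1 ^ (n + 1))
        = v * (deltaC c) y := by
      rw [hdy, hv, ← map_mul]
      congr 1
      ring
    have hR : Ideal.Quotient.mk (Ic c) ((C' 𝔡 * (B * A)) * X 1 ^ ((n + 1) + m))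
        = (algebraMap R (FormalAnnulus R c) 𝔡 * v ^ m * ↑β * y) * v := by
      rw [hyA, hv, ← hB, ← Ideal.Quotient.mk_algebraMap, ← MvPowerSeries.c_eq_algebraMap,
        ← map_pow, ← map_mul, ← map_mul, ← map_mul, ← map_mul]
      congr 1
      ring
    rw [hL, hR, E0]
  obtain ⟨x, hx⟩ := Ideal.mem_span_singleton'.mp (Ideal.Quotient.eq.mp H)
  have key : ∀ k N : ℕ,
      phi c k (N + 1) ((C' (n : R) * A + deltaFun A) * X 1 ^ (n + 1))
        - phi c k (N + 1) ((C' 𝔡 * (B * A)) * X 1 ^ ((n + 1) + m))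
      = -(c ^ (N + 1) * coeff (R := R) (pr N (k + N)) x) := by
    intro k N
    rw [← phi_sub, ← hx, phi_mul_gelt]
  -- valuation setup
  obtain ⟨ϖ, hϖ⟩ := IsDiscreteValuationRing.exists_irreducible R
  obtain ⟨z, hz⟩ : ϖ ∣ c := by
    have h1 := (IsDiscreteValuationRing.irreducible_iff_uniformizer ϖ).mp hϖ
    have h2 : c ∈ IsLocalRing.maximalIdeal R := (IsLocalRing.mem_maximalIdeal _).mpr hcu
    rw [h1, Ideal.mem_span_singleton] at h2
    exact h2
  have hpR0 : ((p : ℕ) : R) ≠ 0 := Nat.cast_ne_zero.mpr hp.pos.ne'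
  obtain ⟨e, up, hup⟩ := IsDiscreteValuationRing.eq_unit_mul_pow_irreducible hpR0 hϖ
  have he : 1 ≤ e := by
    rcases Nat.eq_zero_or_pos e with h | h
    · exfalso
      have h1 : IsUnit ((p : ℕ) : R) := by
        rw [hup, h, pow_zero, mul_one]; exact up.isUnit
      have h2 : (IsLocalRing.residue R) ((p : ℕ) : R) = 0 := by
        rw [map_natCast]; exact CharP.cast_eq_zero _ p
      have h3 : ((p : ℕ) : R) ∈ IsLocalRing.maximalIdeal R :=
        (IsLocalRing.residue_eq_zero_iff _).mp h2
      exact ((IsLocalRing.mem_maximalIdeal _).mp h3) h1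
    · exact h
  have cast_val : ∀ k : ℕ, k ≠ 0 → ∃ u : Rˣ, (k : R) = ↑u * ϖ ^ (e * padicValNat p k) := by
    intro k hk
    have hfac : p ^ padicValNat p k * (k / p ^ padicValNat p k) = k := by
      have h1 := Nat.ordProj_mul_ordCompl_eq_self k p
      rwa [Nat.factorization_def k hp] at h1
    have hndvd : ¬ p ∣ (k / p ^ padicValNat p k) := by
      have h1 := Nat.not_dvd_ordCompl hp hk
      rwa [Nat.factorization_def k hp] at h1
    have hku : IsUnit ((k / p ^ padicValNat p k : ℕ) : R) := by
      by_contra hcon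
      have h2 : (IsLocalRing.residue R) ((k / p ^ padicValNat p k : ℕ) : R) = 0 :=
        (IsLocalRing.residue_eq_zero_iff _).mpr ((IsLocalRing.mem_maximalIdeal _).mpr hcon)
      rw [map_natCast] at h2
      exact hndvd ((CharP.cast_eq_zero_iff (IsLocalRing.ResidueField R) p _).mp h2)
    obtain ⟨u', hu'⟩ := hku
    refine ⟨up ^ padicValNat p k * u', ?_⟩
    have h3 : (k : R) = ((p : ℕ) : R) ^ padicValNat p k *
        ((k / p ^ padicValNat p k : ℕ) : R) := by
      rw [← Nat.cast_pow, ← Nat.cast_mul, hfac]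
    rw [h3, hup, ← hu', mul_pow, ← pow_mul, Units.val_mul, Units.val_pow_eq_pow_val]
    ring
  obtain ⟨un, hun⟩ := cast_val n hn.ne'
  have hnm0 : n + m ≠ 0 := by omega
  obtain ⟨us, hus⟩ := cast_val (n + m) hnm0
  obtain ⟨d, ud, hud⟩ := IsDiscreteValuationRing.eq_unit_mul_pow_irreducible h𝔡 hϖ
  set a := e * padicValNat p n with ha
  set s := e * padicValNat p (n + m) with hs
  have hU1 : IsUnit (phi c 0 (a + 1) A) := phi_zero_unit hcu a hUA
  have hU2 : IsUnit (phi c 0 (d + 1) (B * A)) := phi_zero_unit hcu d hUBA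
  -- first inequality : d + m ≤ a
  have ineq1 : d + m ≤ a := by
    by_contra hlt
    push_neg at hlt
    obtain ⟨t, ht⟩ := phi_mul_X1pow_dvd c (n + 1) m (a + 1) (B * A)
    have hkey := key (n + 1) a
    rw [phi_mul_X1pow_shift', phi_add, phi_Cmul, phi_deltaFun, Nat.cast_zero, zero_mul,
      add_zero, mul_assoc (C' 𝔡), phi_Cmul, ht] at hkey
    have heq1 : (n : R) * phi c 0 (a + 1) A
        = 𝔡 * (c ^ m * t) - c ^ (a + 1) * coeff (R := R) (pr a ((n + 1) + a)) x := by
      linear_combination hkey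
    have hdvd1 : ϖ ^ (a + 1) ∣ 𝔡 * (c ^ m * t) := by
      refine dvd_trans (pow_dvd_pow ϖ hlt) ⟨↑ud * z ^ m * t, ?_⟩
      rw [hud, hz, mul_pow, pow_add]
      ring
    have hdvd2 : ϖ ^ (a + 1) ∣ c ^ (a + 1) * coeff (R := R) (pr a ((n + 1) + a)) x := by
      refine dvd_mul_of_dvd_left ⟨z ^ (a + 1), ?_⟩ _
      rw [hz, mul_pow]
    have hdvd3 : ϖ ^ (a + 1) ∣ ϖ ^ a * (↑un * phi c 0 (a + 1) A) := by
      have h4 : ϖ ^ a * (↑un * phi c 0 (a + 1) A) = (n : R) * phi c 0 (a + 1) A := by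
        rw [hun]; ring
      rw [h4, heq1]
      exact dvd_sub hdvd1 hdvd2
    rw [pow_succ] at hdvd3
    have h5 : ϖ ∣ ↑un * phi c 0 (a + 1) A :=
      (mul_dvd_mul_iff_left (pow_ne_zero a hϖ.ne_zero)).mp hdvd3
    exact hϖ.not_isUnit (isUnit_of_dvd_unit h5 (un.isUnit.mul hU1))
  -- second inequality : s ≤ d
  have ineq2 : s ≤ d := by
    by_contra hlt
    push_neg at hlt
    have hkey := key ((n + 1) + m) d
    rw [show (n + 1) + m = m + (n + 1) from by ring] at hkey
    rw [phi_mul_X1pow_shift, phi_mul_X1pow_shift', phi_add, phi_Cmul, phi_deltaFun,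
      phi_Cmul] at hkey
    have heq2 : ((n + m : ℕ) : R) * phi c m (d + 1) A
        = 𝔡 * phi c 0 (d + 1) (B * A)
          - c ^ (d + 1) * coeff (R := R) (pr d (m + (n + 1) + d)) x := by
      push_cast
      linear_combination hkey
    have hdvd1 : ϖ ^ (d + 1) ∣ ((n + m : ℕ) : R) * phi c m (d + 1) A := by
      refine dvd_trans (pow_dvd_pow ϖ hlt) ⟨↑us * phi c m (d + 1) A, ?_⟩
      rw [hus]; ring
    have hdvd2 : ϖ ^ (d + 1) ∣ c ^ (d + 1) * coeff (R := R) (pr d (m + (n + 1) + d)) x := by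
      refine dvd_mul_of_dvd_left ⟨z ^ (d + 1), ?_⟩ _
      rw [hz, mul_pow]
    have hdvd3 : ϖ ^ (d + 1) ∣ ϖ ^ d * (↑ud * phi c 0 (d + 1) (B * A)) := by
      have h4 : ϖ ^ d * (↑ud * phi c 0 (d + 1) (B * A)) = 𝔡 * phi c 0 (d + 1) (B * A) := by
        rw [hud]; ring
      rw [h4, show 𝔡 * phi c 0 (d + 1) (B * A)
        = ((n + m : ℕ) : R) * phi c m (d + 1) A
          + c ^ (d + 1) * coeff (R := R) (pr d (m + (n + 1) + d)) x from by linear_combination -heq2]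
      exact dvd_add hdvd1 hdvd2
    rw [pow_succ] at hdvd3
    have h5 : ϖ ∣ ↑ud * phi c 0 (d + 1) (B * A) :=
      (mul_dvd_mul_iff_left (pow_ne_zero d hϖ.ne_zero)).mp hdvd3
    exact hϖ.not_isUnit (isUnit_of_dvd_unit h5 (ud.isUnit.mul hU2))
  constructor
  · intro hm
    have h2 : padicValNat p (n + m) < padicValNat p n := by
      by_contra hcon
      push_neg at hcon
      have h3 : a ≤ s := Nat.mul_le_mul (le_refl e) hcon
      omega
    have hd1 : p ^ padicValNat p (n + m) ∣ n + m := pow_padicValNat_dvd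
    have hd2 : p ^ padicValNat p (n + m) ∣ n :=
      dvd_trans (pow_dvd_pow p (le_of_lt h2)) pow_padicValNat_dvd
    have hd3 : p ^ padicValNat p (n + m) ∣ m := by
      have h4 := Nat.dvd_sub hd1 hd2
      rwa [show n + m - n = m from by omega] at h4
    have hd4 : ¬ p ^ (padicValNat p (n + m) + 1) ∣ m := by
      intro hdd
      have h5 : p ^ (padicValNat p (n + m) + 1) ∣ n :=
        dvd_trans (pow_dvd_pow p h2) pow_padicValNat_dvd
      exact pow_succ_padicValNat_not_dvd hnm0 (dvd_add h5 hdd)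
    have hm1 : padicValNat p (n + m) ≤ padicValNat p m :=
      (padicValNat_dvd_iff_le hm).mp hd3
    have hm2 : padicValNat p m ≤ padicValNat p (n + m) := by
      by_contra hcon
      push_neg at hcon
      exact hd4 ((padicValNat_dvd_iff_le hm).mpr hcon)
    omega
  · constructor
    · intro hm
      subst hm
      have h1 : d ≤ a := by omega
      have h2 : a ≤ d := by
        have h3 : s = a := by rw [hs, ha]; norm_num
        omega
      have hda : d = a := le_antisymm h1 h2
      rw [Ideal.span_singleton_eq_span_singleton]
      refine ⟨ud⁻¹ * un, ?_⟩
      rw [hud, hun, hda, Units.val_mul]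
      calc ↑ud * ϖ ^ a * (↑ud⁻¹ * ↑un) = (↑ud * ↑ud⁻¹) * (↑un * ϖ ^ a) := by ring
        _ = ↑un * ϖ ^ a := by rw [ud.mul_inv, one_mul]
    · intro hspan
      obtain ⟨u, hu⟩ := Ideal.span_singleton_eq_span_singleton.mp hspan
      have heq : ↑(ud * u) * ϖ ^ d = ↑un * ϖ ^ a := by
        rw [Units.val_mul, ← hun, ← hu, hud]
        ring
      have h6 := IsDiscreteValuationRing.unit_mul_pow_congr_pow hϖ hϖ (ud * u) un d a heq
      omega
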